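/- Let π̃ be a probability measure invariant under a Markov kernel α on a measurable space S, and suppose R([μ]_1⊗p ‖ [μ]_1⊗α) < ∞ where p is a kernel leaving the probability measure [μ]_1 invariant. If there exist N and c > 0 with α^{(N)}(x,·) ≤ cπ̃ for all x, then [μ]_1 ≪ π̃. -/

import Mathlib

open MeasureTheory ProbabilityTheory
open scoped Classical
open scoped ENNReal

/-- Relative entropy (Kullback–Leibler divergence) with values in `ℝ≥0∞`. -/
noncomputable def relEnt {V : Type*} [MeasurableSpace V] (γ θ : Measure V) : ℝ≥0∞ :=
  if γ ≪ θ ∧ Integrable (fun x => Real.log (γ.rnDeriv θ x).toReal) γ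
  then ENNReal.ofReal (∫ x, Real.log (γ.rnDeriv θ x).toReal ∂γ) else ⊤

/-- `N`-step transition kernel `α^{(N)}`. -/
noncomputable def iterKernel {S : Type*} [MeasurableSpace S]
    (α : Kernel S S) : ℕ → Kernel S S
  | 0 => Kernel.id
  | (n + 1) => (iterKernel α n).comp α

instance iterKernel_markov {S : Type*} [MeasurableSpace S]
    (α : Kernel S S) [IsMarkovKernel α] (n : ℕ) : IsMarkovKernel (iterKernel α n) := by
  induction n with
  | zero => rw [iterKernel]; infer_instance
  | succ n ih => rw [iterKernel]; exact Kernel.IsMarkovKernel.comp _ _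

lemma bind_mono_ac {S T : Type*} [MeasurableSpace S] [MeasurableSpace T]
    {ν₁ ν₂ : Measure S} (h : ν₁ ≪ ν₂) (κ : Kernel S T) [IsSFiniteKernel κ] :
    ν₁.bind (fun x => κ x) ≪ ν₂.bind (fun x => κ x) := by
  intro A hA0
  rcases exists_measurable_superset_of_null hA0 with ⟨B, hAB, hB, hB0⟩
  refine measure_mono_null hAB ?_
  rw [Measure.bind_apply hB κ.measurable.aemeasurable] at hB0 ⊢
  rw [lintegral_eq_zero_iff (κ.measurable_coe hB)] at hB0 ⊢
  exact h.ae_le hB0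

lemma snd_compProd_eq_bind {S : Type*} [MeasurableSpace S] [StandardBorelSpace S]
    (ν : Measure S) [IsFiniteMeasure ν] (κ : Kernel S S) [IsMarkovKernel κ] :
    (ν ⊗ₘ κ).snd = ν.bind (fun x => κ x) := by
  ext s hs
  rw [Measure.snd_apply hs, Measure.compProd_apply (measurable_snd hs),
    Measure.bind_apply hs κ.measurable.aemeasurable]
  rfl

lemma bind_comp_eq {S : Type*} [MeasurableSpace S]
    (ν : Measure S) (κ η : Kernel S S) [IsSFiniteKernel κ] [IsSFiniteKernel η] :
    ν.bind (fun x => (κ.comp η) x) = (ν.bind (fun x => η x)).bind (fun x => κ x) := by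
  rw [Measure.bind_bind η.measurable.aemeasurable κ.measurable.aemeasurable]
  simp_rw [Kernel.comp_apply]

/-- if `π̃` is invariant under `α`, `R([μ]₁ ⊗ p ‖ [μ]₁ ⊗ α) < ∞` where
`p` leaves `[μ]₁` invariant (i.e. `μ = [μ]₁ ⊗ p` has equal marginals), and
`α^{(N)}(x,·) ≤ c·π̃` for all `x`, then `[μ]₁ ≪ π̃`. -/
theorem stmt15 {S : Type*} [MeasurableSpace S] [StandardBorelSpace S]
    (μ : Measure (S × S)) [IsProbabilityMeasure μ] (hμ : μ.fst = μ.snd)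
    (p α : Kernel S S) [IsMarkovKernel p] [IsMarkovKernel α]
    (hp : μ = μ.fst ⊗ₘ p)
    (πt : Measure S) [IsProbabilityMeasure πt]
    (hinv : πt.bind (fun x => α x) = πt)
    (N : ℕ) (c : ℝ) (hc : 0 < c)
    (hdom : ∀ x, iterKernel α N x ≤ (ENNReal.ofReal c) • πt)
    (hfin : relEnt (μ.fst ⊗ₘ p) (μ.fst ⊗ₘ α) < ⊤) :
    μ.fst ≪ πt := by
  -- absolute continuity from finiteness of relEnt
  have hac : (μ.fst ⊗ₘ p) ≪ (μ.fst ⊗ₘ α) := by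
    by_contra hcontra
    rw [relEnt, if_neg (fun h => hcontra h.1)] at hfin
    exact absurd hfin (lt_irrefl _)
  -- μ.fst ≪ μ.fst.bind α
  have h1 : μ.fst ≪ μ.fst.bind (fun x => α x) := by
    have h2 : (μ.fst ⊗ₘ p).snd ≪ (μ.fst ⊗ₘ α).snd := hac.map measurable_snd
    rw [snd_compProd_eq_bind, snd_compProd_eq_bind] at h2
    have : (μ.fst).bind (fun x => p x) = μ.fst := by
      rw [← snd_compProd_eq_bind, ← hp, ← hμ]
    rwa [this] at h2
  -- iterate
  have hiter : ∀ n, μ.fst ≪ μ.fst.bind (fun x => iterKernel α n x) := by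
    intro n
    induction n with
    | zero =>
      simp only [iterKernel, Kernel.id_apply]
      rw [Measure.bind_dirac]
    | succ n ih =>
      have := bind_mono_ac h1 (iterKernel α n)
      rw [show (fun x => iterKernel α (n+1) x) = fun x => ((iterKernel α n).comp α) x from rfl,
        bind_comp_eq]
      exact ih.trans this
  -- domination
  refine (hiter N).trans ?_
  intro A hA0
  rcases exists_measurable_superset_of_null hA0 with ⟨B, hAB, hB, hB0⟩
  have hle : μ.fst.bind (fun x => iterKernel α N x) A = 0 := by
    refine le_antisymm ?_ zero_le
    calc μ.fst.bind (fun x => iterKernel α N x) A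
        ≤ μ.fst.bind (fun x => iterKernel α N x) B := measure_mono hAB
      _ = ∫⁻ x, iterKernel α N x B ∂μ.fst :=
          Measure.bind_apply hB (iterKernel α N).measurable.aemeasurable
      _ ≤ ∫⁻ _, (ENNReal.ofReal c) * πt B ∂μ.fst := by
          refine lintegral_mono fun x => ?_
          have := hdom x B
          simpa [Measure.smul_apply, smul_eq_mul] using this
      _ = (ENNReal.ofReal c) * πt B := by simp
      _ = 0 := by rw [hB0, mul_zero]
  exact hle
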